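/- Let pₙ*/qₙ* denote the nth convergent of the regular continued fraction expansion of e. Then ∑_{n≥0} |pₙ* − e·qₙ*| = ∑_{n≥0} 2^(2n+1) · n! / (2n+1)! − e. -/

import Mathlib

open Real

open intervalIntegral

noncomputable def J (a b : ℕ) : ℝ := ∫ x in (0:ℝ)..1, x^a * (1-x)^b * Real.exp x

lemma contJ (a b : ℕ) : Continuous fun x : ℝ => x^a * (1-x)^b * Real.exp x := by
  fun_prop

lemma intJ (a b : ℕ) : IntervalIntegrable (fun x : ℝ => x^a * (1-x)^b * Real.exp x)
    MeasureTheory.volume 0 1 := (contJ a b).intervalIntegrable _ _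

lemma Jpos (a b : ℕ) : 0 < J a b := by
  apply intervalIntegral_pos_of_pos_on (intJ a b) _ one_pos
  intro x hx
  have h1 : 0 < x := hx.1
  have h2 : x < 1 := hx.2
  exact mul_pos (mul_pos (pow_pos h1 a) (pow_pos (by linarith) b)) (Real.exp_pos x)

lemma Jle (a b : ℕ) : J a b ≤ Real.exp 1 - 1 := by
  have : J 0 0 = Real.exp 1 - 1 := by
    simp [J, integral_exp]
  rw [← this]
  apply intervalIntegral.integral_mono_on zero_le_one (intJ a b) (intJ 0 0)
  intro x hx
  simp only [pow_zero, one_mul]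
  have hx1 : 0 ≤ x := hx.1
  have hx2 : x ≤ 1 := hx.2
  have e1 : x ^ a ≤ 1 := pow_le_one₀ hx1 hx2
  have e2 : (1 - x) ^ b ≤ 1 := pow_le_one₀ (by linarith) (by linarith)
  have := Real.exp_pos x
  calc x^a * (1-x)^b * Real.exp x ≤ 1 * 1 * Real.exp x := by
        apply mul_le_mul _ le_rfl (le_of_lt this) (by norm_num)
        apply mul_le_mul e1 e2 (pow_nonneg (by linarith) b) (by norm_num)
    _ = Real.exp x := by ring

lemma Jsplit (a b : ℕ) : J a (b+1) = J a b - J (a+1) b := by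
  rw [J, J, J, ← intervalIntegral.integral_sub (intJ a b) (intJ (a+1) b)]
  apply intervalIntegral.integral_congr
  intro x _
  ring

lemma ibpJ (a b : ℕ) :
    ((a:ℝ)+1) * J a (b+1) + J (a+1) (b+1) = ((b:ℝ)+1) * J (a+1) b := by
  have hd : ∀ x ∈ Set.uIcc (0:ℝ) 1, HasDerivAt (fun y : ℝ => y^(a+1) * (1-y)^(b+1) * Real.exp y)
      (((a:ℝ)+1) * (x^a*(1-x)^(b+1)*Real.exp x)
        - ((b:ℝ)+1) * (x^(a+1)*(1-x)^b*Real.exp x)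
        + x^(a+1)*(1-x)^(b+1)*Real.exp x) x := by
    intro x _
    have h1 : HasDerivAt (fun y : ℝ => y^(a+1)) (((a:ℝ)+1) * x^a) x := by
      simpa using hasDerivAt_pow (a+1) x
    have h2 : HasDerivAt (fun y : ℝ => (1-y)^(b+1)) (-(((b:ℝ)+1) * (1-x)^b)) x := by
      have hin : HasDerivAt (fun y : ℝ => 1-y) (-1) x := by
        simpa using (hasDerivAt_id x).const_sub 1
      have := (hasDerivAt_pow (b+1) (1-x)).comp x hin
      refine this.congr_deriv ?_
      push_cast
      ring
    have h3 := ((h1.mul h2).mul (Real.hasDerivAt_exp x))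
    refine h3.congr_deriv ?_
    simp only [Pi.mul_apply]
    ring
  have hint : IntervalIntegrable (fun x : ℝ => ((a:ℝ)+1) * (x^a*(1-x)^(b+1)*Real.exp x)
        - ((b:ℝ)+1) * (x^(a+1)*(1-x)^b*Real.exp x)
        + x^(a+1)*(1-x)^(b+1)*Real.exp x) MeasureTheory.volume 0 1 :=
    (((intJ a (b+1)).const_mul _).sub ((intJ (a+1) b).const_mul _)).add (intJ (a+1) (b+1))
  have key := intervalIntegral.integral_eq_sub_of_hasDerivAt hd hint
  simp only [one_pow, sub_self, zero_pow, Nat.succ_ne_zero, ne_eq, not_false_iff,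
    mul_zero, zero_mul, mul_one, zero_pow] at key
  rw [intervalIntegral.integral_add (((intJ a (b+1)).const_mul _).sub ((intJ (a+1) b).const_mul _))
      (intJ (a+1) (b+1)),
    intervalIntegral.integral_sub ((intJ a (b+1)).const_mul _) ((intJ (a+1) b).const_mul _),
    intervalIntegral.integral_const_mul, intervalIntegral.integral_const_mul] at key
  have : (0:ℝ)^(a+1) * (1-0:ℝ)^(b+1) * Real.exp 0 = 0 := by simp
  rw [J, J, J]
  linarith [key]

lemma J00 : J 0 0 = Real.exp 1 - 1 := by simp [J, integral_exp]

lemma J10 : J 1 0 = 1 := by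
  have hd : ∀ x ∈ Set.uIcc (0:ℝ) 1, HasDerivAt (fun y : ℝ => (y - 1) * Real.exp y)
      (x^1 * (1-x)^0 * Real.exp x) x := by
    intro x _
    have h1 : HasDerivAt (fun y : ℝ => y - 1) 1 x := by
      simpa using (hasDerivAt_id x).sub_const 1
    have := h1.mul (Real.hasDerivAt_exp x)
    refine this.congr_deriv ?_
    ring
  have key := intervalIntegral.integral_eq_sub_of_hasDerivAt hd (intJ 1 0)
  rw [J, key]
  simp

lemma J01 : J 0 1 = Real.exp 1 - 2 := by
  have := Jsplit 0 0
  rw [J00, J10] at this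
  linarith

/-- `bb m` is `β_{m-1} = |p_{m-1} - e q_{m-1}|`, shifted by one. -/
noncomputable def bb (m : ℕ) : ℝ :=
  if m % 3 = 0 then J (m/3+1) (m/3) / (m/3).factorial
  else if m % 3 = 1 then J (m/3) (m/3+1) / (m/3).factorial
  else J (m/3+1) (m/3+1) / ((m/3)+1).factorial

/-- partial denominators of the continued fraction of e -/
def aCF (m : ℕ) : ℤ :=
  if m = 0 then 2 else if m % 3 = 2 then (2*(m/3+1) : ℕ) else 1

lemma bb_pos (m : ℕ) : 0 < bb m := by
  unfold bb
  split_ifs <;> exact div_pos (Jpos _ _) (by positivity)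

lemma aCF_one_le (m : ℕ) : 1 ≤ aCF m := by
  unfold aCF
  split_ifs <;> omega

lemma bb0 (k : ℕ) : bb (3*k) = J (k+1) k / k.factorial := by
  have h1 : 3*k % 3 = 0 := by omega
  have h2 : 3*k/3 = k := by omega
  simp [bb, h1, h2]

lemma bb1 (k : ℕ) : bb (3*k+1) = J k (k+1) / k.factorial := by
  have h1 : (3*k+1) % 3 = 1 := by omega
  have h2 : (3*k+1)/3 = k := by omega
  simp [bb, h1, h2]

lemma bb2 (k : ℕ) : bb (3*k+2) = J (k+1) (k+1) / (k+1).factorial := by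
  have h1 : (3*k+2) % 3 = 2 := by omega
  have h2 : (3*k+2)/3 = k := by omega
  simp [bb, h1, h2]

lemma fact_pos' (k : ℕ) : (0:ℝ) < (k.factorial : ℝ) := by positivity

lemma key0 (k : ℕ) : bb (3*k) = bb (3*k+1) + bb (3*k+2) := by
  have h := ibpJ k k
  rw [bb0, bb1, bb2]
  have hf : ((k+1).factorial : ℝ) = ((k:ℝ)+1) * k.factorial := by
    rw [Nat.factorial_succ]; push_cast; ring
  rw [hf]
  have h1 := fact_pos' k
  field_simp
  linear_combination (-1:ℝ) * h

lemma key1 (k : ℕ) : bb (3*k+1) = 2*((k:ℝ)+1) * bb (3*k+2) + bb (3*k+3) := by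
  have h := ibpJ k (k+1)
  have s1 := Jsplit k (k+1)
  have s2 := Jsplit (k+1) (k+1)
  have h3 : (3*k+3) = 3*(k+1) := by ring
  rw [bb1, bb2, h3, bb0]
  have hf : ((k+1).factorial : ℝ) = ((k:ℝ)+1) * k.factorial := by
    rw [Nat.factorial_succ]; push_cast; ring
  rw [hf]
  have h1 := fact_pos' k
  have hk : (0:ℝ) < (k:ℝ) + 1 := by positivity
  push_cast at h
  field_simp
  linear_combination h - ((k:ℝ)+1) * s1 - s2

lemma key2 (k : ℕ) : bb (3*k+2) = bb (3*k+3) + bb (3*k+4) := by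
  have s2 := Jsplit (k+1) (k+1)
  have h3 : (3*k+3) = 3*(k+1) := by ring
  have h4 : (3*k+4) = 3*(k+1)+1 := by ring
  rw [bb2, h3, bb0, h4, bb1]
  rw [← add_div, s2]
  ring

lemma bbrec (m : ℕ) : bb m = (aCF (m+1) : ℝ) * bb (m+1) + bb (m+2) := by
  obtain ⟨k, rfl | rfl | rfl⟩ : ∃ k, m = 3*k ∨ m = 3*k+1 ∨ m = 3*k+2 := ⟨m/3, by omega⟩
  · have ha : ((aCF (3*k+1) : ℤ) : ℝ) = 1 := by
      have h1 : (3*k+1) % 3 = 1 := by omega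
      simp [aCF, h1]
    rw [ha, one_mul]
    exact key0 k
  · have ha : ((aCF (3*k+1+1) : ℤ) : ℝ) = 2*((k:ℝ)+1) := by
      have h0 : 3*k+1+1 = 3*k+2 := by ring
      have h1 : (3*k+2) % 3 = 2 := by omega
      have h2 : (3*k+2)/3 = k := by omega
      rw [h0]
      simp only [aCF, h1, h2, if_neg (by omega : ¬ 3*k+2 = 0), if_pos rfl]
      push_cast; ring
    rw [ha]
    have e1 : 3*k+1+1 = 3*k+2 := by ring
    have e2 : 3*k+1+2 = 3*k+3 := by ring
    rw [e1, e2]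
    exact key1 k
  · have ha : ((aCF (3*k+2+1) : ℤ) : ℝ) = 1 := by
      have h1 : (3*k+3) % 3 = 0 := by omega
      have h0 : 3*k+2+1 = 3*k+3 := by ring
      rw [h0]
      simp only [aCF, h1, if_neg (by omega : ¬ 3*k+3 = 0)]
      norm_num
    rw [ha, one_mul]
    have e1 : 3*k+2+1 = 3*k+3 := by ring
    have e2 : 3*k+2+2 = 3*k+4 := by ring
    rw [e1, e2]
    exact key2 k

lemma bb_dec (m : ℕ) : bb (m+2) < bb (m+1) := by
  have h := bbrec (m+1)
  have h1 := bb_pos (m+3)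
  have h2 := bb_pos (m+2)
  have h3 : (1:ℝ) ≤ (aCF (m+2) : ℝ) := by exact_mod_cast aCF_one_le (m+2)
  nlinarith

lemma exp_one_bounds : (2:ℝ) < Real.exp 1 ∧ Real.exp 1 < 3 := by
  constructor
  · linarith [Real.exp_one_gt_d9]
  · linarith [Real.exp_one_lt_d9]

lemma bb_zero : bb 0 = 1 := by
  have := bb0 0
  simpa [J10] using this

lemma bb_one : bb 1 = Real.exp 1 - 2 := by
  have := bb1 0
  simpa [J01] using this

open GenContFract in
lemma streamE (m : ℕ) : GenContFract.IntFractPair.stream (Real.exp 1) m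
    = some ⟨aCF m, bb (m+1) / bb m⟩ := by
  induction m with
  | zero =>
    rw [IntFractPair.stream_zero]
    congr 1
    have h2 : ⌊Real.exp 1⌋ = 2 := by
      rw [Int.floor_eq_iff]
      push_cast
      exact ⟨le_of_lt exp_one_bounds.1, by linarith [exp_one_bounds.2]⟩
    unfold GenContFract.IntFractPair.of
    rw [Int.fract]
    rw [h2, bb_zero, bb_one]
    simp [aCF]
  | succ n ih =>
    have hfrne : bb (n+1) / bb n ≠ 0 := by
      have := bb_pos (n+1); have := bb_pos n
      positivity
    have hs := GenContFract.IntFractPair.stream_succ_of_some ih hfrne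
    rw [hs]
    congr 1
    have hinv : ((⟨aCF n, bb (n+1) / bb n⟩ : IntFractPair ℝ).fr)⁻¹ = bb n / bb (n+1) := by
      simp [inv_div]
    rw [hinv]
    have hpos1 := bb_pos (n+1)
    have hpos2 := bb_pos (n+2)
    have hrec : bb n / bb (n+1) = (aCF (n+1) : ℝ) + bb (n+2) / bb (n+1) := by
      rw [bbrec n]
      field_simp
    have hr0 : 0 ≤ bb (n+2) / bb (n+1) := by positivity
    have hr1 : bb (n+2) / bb (n+1) < 1 := by
      rw [div_lt_one hpos1]
      exact bb_dec n
    unfold GenContFract.IntFractPair.of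
    rw [Int.fract, hrec]
    congr 1
    · rw [Int.floor_intCast_add]
      simp [Int.floor_eq_zero_iff, Set.mem_Ico, hr0, hr1]
    · rw [Int.floor_intCast_add]
      have : ⌊bb (n+2) / bb (n+1)⌋ = 0 := by
        simp [Int.floor_eq_zero_iff, Set.mem_Ico, hr0, hr1]
      rw [this]
      push_cast
      ring

lemma floorE : ⌊Real.exp 1⌋ = 2 := by
  rw [Int.floor_eq_iff]
  push_cast
  exact ⟨le_of_lt exp_one_bounds.1, by linarith [exp_one_bounds.2]⟩

lemma ofE_h : (GenContFract.of (Real.exp 1)).h = (2:ℝ) := by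
  rw [GenContFract.of_h_eq_floor, floorE]
  norm_num

lemma sE (n : ℕ) : (GenContFract.of (Real.exp 1)).s.get? n = some ⟨1, (aCF (n+1) : ℝ)⟩ :=
  GenContFract.get?_of_eq_some_of_succ_get?_intFractPair_stream (streamE (n+1))

lemma bb_two : bb 2 = 3 - Real.exp 1 := by
  have h := bbrec 0
  have ha : ((aCF 1 : ℤ) : ℝ) = 1 := by simp [aCF]
  rw [bb_zero, bb_one, ha] at h
  linarith

lemma aCF_cast_nonneg (m : ℕ) : (0:ℝ) ≤ (aCF m : ℝ) := by
  have := aCF_one_le m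
  have : (1:ℝ) ≤ (aCF m : ℝ) := by exact_mod_cast this
  linarith

lemma errP (m : ℕ) : (GenContFract.of (Real.exp 1)).nums m
    - Real.exp 1 * (GenContFract.of (Real.exp 1)).dens m = (-1)^(m+1) * bb (m+1) := by
  induction m using Nat.twoStepInduction with
  | zero =>
    rw [GenContFract.zeroth_num_eq_h, GenContFract.zeroth_den_eq_one, ofE_h, bb_one]
    ring
  | one =>
    rw [GenContFract.first_num_eq (sE 0), GenContFract.first_den_eq (sE 0), ofE_h]
    have ha : ((aCF 1 : ℤ) : ℝ) = 1 := by simp [aCF]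
    rw [ha, bb_two]
    ring
  | more n ih1 ih2 =>
    have hrecN := GenContFract.nums_recurrence (sE (n+1)) rfl rfl
    have hrecD := GenContFract.dens_recurrence (sE (n+1)) rfl rfl
    rw [hrecN, hrecD]
    have hb := bbrec (n+1)
    have e1 : (-1:ℝ)^(n+1+1+1) = -(-1)^(n+1+1) := by ring
    calc (aCF (n+2) : ℝ) * (GenContFract.of (Real.exp 1)).nums (n+1)
          + 1 * (GenContFract.of (Real.exp 1)).nums n
        - Real.exp 1 * ((aCF (n+2) : ℝ) * (GenContFract.of (Real.exp 1)).dens (n+1)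
          + 1 * (GenContFract.of (Real.exp 1)).dens n)
        = (aCF (n+2) : ℝ) * ((GenContFract.of (Real.exp 1)).nums (n+1)
            - Real.exp 1 * (GenContFract.of (Real.exp 1)).dens (n+1))
          + ((GenContFract.of (Real.exp 1)).nums n
            - Real.exp 1 * (GenContFract.of (Real.exp 1)).dens n) := by ring
      _ = (aCF (n+2) : ℝ) * ((-1)^(n+1+1) * bb (n+1+1)) + (-1)^(n+1) * bb (n+1) := by
          rw [ih2, ih1]
      _ = (-1)^(n+2+1) * bb (n+2+1) := by
          have : bb (n+3) = bb (n+1) - (aCF (n+2) : ℝ) * bb (n+2) := by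
            have := bbrec (n+1); linarith
          rw [this]
          ring

noncomputable def AA (k : ℕ) : ℝ := J k k / k.factorial
noncomputable def BB (k : ℕ) : ℝ := J (k+1) k / k.factorial

lemma AA_pos (k : ℕ) : 0 < AA k := div_pos (Jpos _ _) (fact_pos' k)
lemma BB_pos (k : ℕ) : 0 < BB k := div_pos (Jpos _ _) (fact_pos' k)

lemma summable_aux : Summable (fun k : ℕ => (Real.exp 1 - 1) * (1^k / k.factorial : ℝ)) :=
  (Real.summable_pow_div_factorial 1).mul_left _

lemma SA : Summable AA := by
  apply Summable.of_nonneg_of_le (fun k => (AA_pos k).le) _ summable_aux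
  intro k
  rw [AA, one_pow]
  rw [div_le_iff₀ (fact_pos' k)]
  have := Jle k k
  have h1 := fact_pos' k
  calc J k k ≤ Real.exp 1 - 1 := Jle k k
    _ = (Real.exp 1 - 1) * (1 / ↑k.factorial) * ↑k.factorial := by field_simp

lemma SB : Summable BB := by
  apply Summable.of_nonneg_of_le (fun k => (BB_pos k).le) _ summable_aux
  intro k
  rw [BB, one_pow]
  rw [div_le_iff₀ (fact_pos' k)]
  calc J (k+1) k ≤ Real.exp 1 - 1 := Jle (k+1) k
    _ = (Real.exp 1 - 1) * (1 / ↑k.factorial) * ↑k.factorial := by field_simp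

lemma AA_zero : AA 0 = Real.exp 1 - 1 := by simp [AA, J00]
lemma BB_zero : BB 0 = 1 := by simp [BB, J10]

lemma triple (k : ℕ) :
    bb (3*k+1) + bb (3*k+2) + bb (3*k+3) = AA k + AA (k+1) + (BB (k+1) - BB k) := by
  have h1 : bb (3*k+1) = AA k - BB k := by
    rw [bb1, AA, BB, Jsplit k k]
    ring
  have h2 : bb (3*k+2) = AA (k+1) := by rw [bb2, AA]
  have h3 : bb (3*k+3) = BB (k+1) := by
    have : 3*k+3 = 3*(k+1) := by ring
    rw [this, bb0, BB]
  rw [h1, h2, h3]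
  ring

lemma telescope_hasSum : HasSum (fun k => BB (k+1) - BB k) (0 - BB 0) := by
  have hsum : Summable (fun k => BB (k+1) - BB k) :=
    ((summable_nat_add_iff 1).2 SB).sub SB
  rw [Summable.hasSum_iff_tendsto_nat hsum]
  have : ∀ n : ℕ, ∑ i ∈ Finset.range n, (BB (i+1) - BB i) = BB n - BB 0 := by
    intro n
    exact Finset.sum_range_sub BB n
  simp_rw [this]
  exact (SB.tendsto_atTop_zero).sub_const (BB 0)

lemma triple_summable : Summable (fun k => bb (3*k+1) + bb (3*k+2) + bb (3*k+3)) := by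
  have : Summable (fun k => AA k + AA (k+1) + (BB (k+1) - BB k)) :=
    (SA.add ((summable_nat_add_iff 1).2 SA)).add telescope_hasSum.summable
  exact this.congr (fun k => (triple k).symm)

lemma tsum_triple : ∑' k, (bb (3*k+1) + bb (3*k+2) + bb (3*k+3)) = 2 * (∑' k, AA k) - Real.exp 1 := by
  have h1 : ∑' k, (AA k + AA (k+1) + (BB (k+1) - BB k))
      = (∑' k, AA k) + (∑' k, AA (k+1)) + (0 - BB 0) := by
    rw [Summable.tsum_add (SA.add ((summable_nat_add_iff 1).2 SA)) telescope_hasSum.summable,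
      Summable.tsum_add SA ((summable_nat_add_iff 1).2 SA), telescope_hasSum.tsum_eq]
  have h2 : ∑' k, AA (k+1) = (∑' k, AA k) - AA 0 := by
    have := Summable.tsum_eq_zero_add SA
    linarith
  calc ∑' k, (bb (3*k+1) + bb (3*k+2) + bb (3*k+3))
      = ∑' k, (AA k + AA (k+1) + (BB (k+1) - BB k)) := tsum_congr triple
    _ = (∑' k, AA k) + ((∑' k, AA k) - AA 0) + (0 - BB 0) := by rw [h1, h2]
    _ = 2 * (∑' k, AA k) - Real.exp 1 := by rw [AA_zero, BB_zero]; ring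

lemma lhs_regroup : ∑' m : ℕ, bb (m+1) = 2 * (∑' k, AA k) - Real.exp 1 := by
  have heq := Equiv.tsum_eq (Nat.divModEquiv 3).symm (fun n => bb (n+1))
  rw [← heq]
  have hform : ∀ p : ℕ × Fin 3, bb ((Nat.divModEquiv 3).symm p + 1)
      = bb (3 * p.1 + (p.2 : ℕ) + 1) := by
    intro p
    congr 2
    simp [Nat.divModEquiv]
    ring
  rw [tsum_congr hform]
  have hsummable : Summable (fun p : ℕ × Fin 3 => bb (3 * p.1 + (p.2 : ℕ) + 1)) := by
    apply (summable_prod_of_nonneg (fun p => (bb_pos _).le)).2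
    constructor
    · intro k
      exact (hasSum_fintype _).summable
    · apply Summable.congr triple_summable
      intro k
      rw [tsum_fintype]
      rw [Fin.sum_univ_three]
      norm_num
  rw [Summable.tsum_prod' hsummable (fun k => (hasSum_fintype _).summable)]
  have : ∀ k : ℕ, ∑' j : Fin 3, bb (3*k + (j:ℕ) + 1) = bb (3*k+1) + bb (3*k+2) + bb (3*k+3) := by
    intro k
    rw [tsum_fintype, Fin.sum_univ_three]
    norm_num
  rw [tsum_congr this, tsum_triple]

lemma real_exp_tsum (y : ℝ) : ∑' n : ℕ, y^n / n.factorial = Real.exp y := by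
  rw [Real.exp_eq_exp_ℝ]
  rw [NormedSpace.exp_eq_tsum_div]

lemma sumF_eq (x : ℝ) : ∑' k : ℕ, x^k * (1-x)^k * Real.exp x / k.factorial
    = Real.exp (2*x - x^2) := by
  have h1 : ∀ k : ℕ, x^k * (1-x)^k * Real.exp x / k.factorial
      = (x*(1-x))^k / k.factorial * Real.exp x := by
    intro k; rw [mul_pow]; ring
  rw [tsum_congr h1, tsum_mul_right, real_exp_tsum, ← Real.exp_add]
  congr 1
  ring

lemma tsumA_eq_integral :
    ∑' k, AA k = ∫ x in Set.Ioc (0:ℝ) 1, Real.exp (2*x - x^2) := by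
  have hF_int : ∀ k : ℕ, MeasureTheory.Integrable
      (fun x : ℝ => x^k * (1-x)^k * Real.exp x / k.factorial)
      (MeasureTheory.volume.restrict (Set.Ioc 0 1)) := by
    intro k
    exact ((contJ k k).div_const _).integrableOn_Ioc
  have hAA : ∀ k : ℕ, ∫ x in Set.Ioc (0:ℝ) 1,
      ‖x^k * (1-x)^k * Real.exp x / k.factorial‖ = AA k := by
    intro k
    have : ∀ x ∈ Set.Ioc (0:ℝ) 1, ‖x^k * (1-x)^k * Real.exp x / k.factorial‖
        = x^k * (1-x)^k * Real.exp x / k.factorial := by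
      intro x hx
      rw [Real.norm_eq_abs, abs_of_nonneg]
      have h1 : 0 ≤ x := le_of_lt hx.1
      have h2 : x ≤ 1 := hx.2
      have := Real.exp_pos x
      have := fact_pos' k
      have h3 : (0:ℝ) ≤ 1 - x := by linarith
      positivity
    rw [MeasureTheory.setIntegral_congr_fun measurableSet_Ioc this]
    rw [AA, J, intervalIntegral.integral_of_le zero_le_one,
      ← MeasureTheory.integral_div]
  have hF_sum : Summable (fun k : ℕ => ∫ x in Set.Ioc (0:ℝ) 1,
      ‖x^k * (1-x)^k * Real.exp x / k.factorial‖) := by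
    apply Summable.congr SA
    intro k
    exact (hAA k).symm
  have key := MeasureTheory.integral_tsum_of_summable_integral_norm hF_int hF_sum
  have hAA' : ∀ k : ℕ, ∫ x in Set.Ioc (0:ℝ) 1,
      x^k * (1-x)^k * Real.exp x / k.factorial = AA k := by
    intro k
    rw [AA, J, intervalIntegral.integral_of_le zero_le_one, ← MeasureTheory.integral_div]
  calc ∑' k, AA k = ∑' k, ∫ x in Set.Ioc (0:ℝ) 1,
        x^k * (1-x)^k * Real.exp x / k.factorial := by
        exact (tsum_congr hAA').symm
    _ = ∫ x in Set.Ioc (0:ℝ) 1, ∑' k : ℕ, x^k * (1-x)^k * Real.exp x / k.factorial := key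
    _ = ∫ x in Set.Ioc (0:ℝ) 1, Real.exp (2*x - x^2) := by
        apply MeasureTheory.integral_congr_ae
        filter_upwards with x
        exact sumF_eq x

lemma contK (a b : ℕ) : Continuous fun x : ℝ => x^a * (1-x)^b := by fun_prop

lemma intK (a b : ℕ) : IntervalIntegrable (fun x : ℝ => x^a * (1-x)^b)
    MeasureTheory.volume 0 1 := (contK a b).intervalIntegrable _ _

lemma ibpK (a b : ℕ) :
    ((a:ℝ)+1) * ∫ x in (0:ℝ)..1, x^a * (1-x)^(b+1)
      = ((b:ℝ)+1) * ∫ x in (0:ℝ)..1, x^(a+1) * (1-x)^b := by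
  have hd : ∀ x ∈ Set.uIcc (0:ℝ) 1, HasDerivAt (fun y : ℝ => y^(a+1) * (1-y)^(b+1))
      (((a:ℝ)+1) * (x^a*(1-x)^(b+1)) - ((b:ℝ)+1) * (x^(a+1)*(1-x)^b)) x := by
    intro x _
    have h1 : HasDerivAt (fun y : ℝ => y^(a+1)) (((a:ℝ)+1) * x^a) x := by
      simpa using hasDerivAt_pow (a+1) x
    have h2 : HasDerivAt (fun y : ℝ => (1-y)^(b+1)) (-(((b:ℝ)+1) * (1-x)^b)) x := by
      have hin : HasDerivAt (fun y : ℝ => 1-y) (-1) x := by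
        simpa using (hasDerivAt_id x).const_sub 1
      have := (hasDerivAt_pow (b+1) (1-x)).comp x hin
      refine this.congr_deriv ?_
      push_cast
      ring
    have h3 := h1.mul h2
    refine h3.congr_deriv ?_
    ring
  have hint : IntervalIntegrable (fun x : ℝ => ((a:ℝ)+1) * (x^a*(1-x)^(b+1))
      - ((b:ℝ)+1) * (x^(a+1)*(1-x)^b)) MeasureTheory.volume 0 1 :=
    ((intK a (b+1)).const_mul _).sub ((intK (a+1) b).const_mul _)
  have key := intervalIntegral.integral_eq_sub_of_hasDerivAt hd hint
  rw [intervalIntegral.integral_sub ((intK a (b+1)).const_mul _) ((intK (a+1) b).const_mul _),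
    intervalIntegral.integral_const_mul, intervalIntegral.integral_const_mul] at key
  simp only [one_pow, sub_self, zero_pow, Nat.succ_ne_zero, ne_eq, not_false_iff,
    mul_zero, zero_mul, mul_one] at key
  linarith [key]

lemma Kval (b a : ℕ) : ∫ x in (0:ℝ)..1, x^a * (1-x)^b
    = (a.factorial : ℝ) * b.factorial / (a+b+1).factorial := by
  induction b generalizing a with
  | zero =>
    simp only [pow_zero, mul_one, Nat.factorial_zero, Nat.cast_one]
    rw [integral_pow]
    rw [Nat.factorial_succ]
    push_cast
    rw [one_pow]
    field_simp
    simp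
  | succ b ih =>
    have h := ibpK a b
    rw [ih (a+1)] at h
    have hpos : (0:ℝ) < (a:ℝ)+1 := by positivity
    have : (∫ x in (0:ℝ)..1, x^a * (1-x)^(b+1))
        = ((b:ℝ)+1) * ((a+1).factorial * b.factorial / ((a+1)+b+1).factorial) / ((a:ℝ)+1) := by
      field_simp at h ⊢
      linarith
    rw [this]
    have e1 : (a+1)+b+1 = a+(b+1)+1 := by ring
    rw [e1]
    rw [Nat.factorial_succ a, Nat.factorial_succ b]
    push_cast
    field_simp

lemma half_sym (n : ℕ) : ∫ x in (1/2:ℝ)..1, x^n * (1-x)^n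
    = ∫ x in (0:ℝ)..(1/2), x^n * (1-x)^n := by
  have h := intervalIntegral.integral_comp_sub_left (a := (0:ℝ)) (b := 1/2)
    (fun t : ℝ => t^n * (1-t)^n) 1
  norm_num at h
  rw [← h]
  apply intervalIntegral.integral_congr
  intro x _
  ring_nf

lemma half_val (n : ℕ) : ∫ x in (0:ℝ)..(1/2), x^n * (1-x)^n
    = (n.factorial : ℝ) * n.factorial / (2*n+1).factorial / 2 := by
  have hsplit : (∫ x in (0:ℝ)..(1/2), x^n * (1-x)^n)
      + ∫ x in (1/2:ℝ)..1, x^n * (1-x)^n = ∫ x in (0:ℝ)..1, x^n * (1-x)^n :=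
    intervalIntegral.integral_add_adjacent_intervals
      ((contK n n).intervalIntegrable _ _) ((contK n n).intervalIntegrable _ _)
  rw [half_sym] at hsplit
  rw [Kval n n] at hsplit
  have e1 : n + n + 1 = 2*n+1 := by ring
  rw [e1] at hsplit
  linarith

lemma Wval (n : ℕ) : ∫ x in (0:ℝ)..1, (2*x - x^2)^n
    = 4^n * (n.factorial : ℝ) * n.factorial / (2*n+1).factorial := by
  have hcomp := intervalIntegral.integral_comp_mul_left (a := (0:ℝ)) (b := 1/2)
    (f := fun t : ℝ => t^n * (2-t)^n) (c := 2) two_ne_zero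
  norm_num at hcomp
  have hpt : ∀ x ∈ Set.uIcc (0:ℝ) (1/2), (2*x)^n * (2-2*x)^n = 4^n * (x^n * (1-x)^n) := by
    intro x _
    calc (2*x)^n * (2-2*x)^n = (2^n*x^n)*(2^n*(1-x)^n) := by
          rw [mul_pow, show (2:ℝ)-2*x=2*(1-x) by ring, mul_pow]
      _ = 4^n * (x^n*(1-x)^n) := by
          rw [show (4:ℝ)^n = 2^n*2^n by rw [← mul_pow]; norm_num]
          ring
  have h1 : (∫ x in (0:ℝ)..(1/2), (2*x)^n * (2-2*x)^n)
      = 4^n * ∫ x in (0:ℝ)..(1/2), x^n * (1-x)^n := by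
    rw [← intervalIntegral.integral_const_mul]
    exact intervalIntegral.integral_congr hpt
  have h2 : (∫ x in (0:ℝ)..1, (2*x-x^2)^n) = ∫ x in (0:ℝ)..1, x^n * (2-x)^n := by
    apply intervalIntegral.integral_congr
    intro x _
    show (2*x - x^2)^n = x^n*(2-x)^n
    rw [← mul_pow]
    congr 1
    ring
  rw [h2]
  have h3 : (∫ x in (0:ℝ)..1, x^n * (2-x)^n) = 2 * ∫ x in (0:ℝ)..(1/2), (2*x)^n * (2-2*x)^n := by
    rw [hcomp]
    ring
  rw [h3, h1, half_val]
  ring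

noncomputable def TT (n : ℕ) : ℝ := 4^n * (n.factorial : ℝ) / ((2*n+1).factorial : ℝ)

lemma fact2n (n : ℕ) : (n.factorial : ℝ) * n.factorial ≤ ((2*n+1).factorial : ℝ) := by
  have h := Nat.factorial_mul_factorial_dvd_factorial_add n (n+1)
  have h2 : n + (n+1) = 2*n+1 := by ring
  rw [h2] at h
  have h3 : n.factorial * (n+1).factorial ≤ (2*n+1).factorial :=
    Nat.le_of_dvd (Nat.factorial_pos _) h
  have h4 : n.factorial * n.factorial ≤ n.factorial * (n+1).factorial := by
    apply Nat.mul_le_mul_left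
    exact Nat.factorial_le (by omega)
  exact_mod_cast le_trans h4 h3

lemma TT_nonneg (n : ℕ) : 0 ≤ TT n := by
  unfold TT
  positivity

lemma TT_summable : Summable TT := by
  have hb : ∀ n, TT n ≤ (4:ℝ)^n / n.factorial := by
    intro n
    unfold TT
    rw [div_le_div_iff₀ (by positivity) (by positivity)]
    have h4 : (0:ℝ) ≤ 4^n := by positivity
    calc (4:ℝ)^n * n.factorial * n.factorial = 4^n * (n.factorial * n.factorial) := by ring
      _ ≤ 4^n * (2*n+1).factorial := mul_le_mul_of_nonneg_left (fact2n n) h4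
      _ = (4:ℝ)^n * (2*n+1).factorial := rfl
  exact Summable.of_nonneg_of_le TT_nonneg hb (Real.summable_pow_div_factorial 4)

lemma TT_eq_int (n : ℕ) : TT n = ∫ x in (0:ℝ)..1, (2*x - x^2)^n / n.factorial := by
  rw [intervalIntegral.integral_div, Wval, TT]
  have := fact_pos' n
  field_simp

lemma contW (n : ℕ) : Continuous fun x : ℝ => (2*x - x^2)^n / n.factorial := by fun_prop

lemma tsumTT_eq_integral :
    ∑' n, TT n = ∫ x in Set.Ioc (0:ℝ) 1, Real.exp (2*x - x^2) := by
  have hF_int : ∀ n : ℕ, MeasureTheory.Integrable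
      (fun x : ℝ => (2*x - x^2)^n / n.factorial)
      (MeasureTheory.volume.restrict (Set.Ioc 0 1)) := by
    intro n
    exact (contW n).integrableOn_Ioc
  have hval : ∀ n : ℕ, ∫ x in Set.Ioc (0:ℝ) 1, (2*x - x^2)^n / n.factorial = TT n := by
    intro n
    rw [TT_eq_int n, intervalIntegral.integral_of_le zero_le_one]
  have hnorm : ∀ n : ℕ, ∫ x in Set.Ioc (0:ℝ) 1,
      ‖(2*x - x^2)^n / n.factorial‖ = TT n := by
    intro n
    rw [← hval n]
    apply MeasureTheory.setIntegral_congr_fun measurableSet_Ioc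
    intro x hx
    show ‖(2*x - x^2)^n / (n.factorial:ℝ)‖ = (2*x - x^2)^n / (n.factorial:ℝ)
    rw [Real.norm_eq_abs, abs_of_nonneg]
    have h1 : 0 < x := hx.1
    have h2 : x ≤ 1 := hx.2
    have h3 : (0:ℝ) ≤ 2*x - x^2 := by nlinarith
    have := fact_pos' n
    positivity
  have hF_sum : Summable (fun n : ℕ => ∫ x in Set.Ioc (0:ℝ) 1,
      ‖(2*x - x^2)^n / n.factorial‖) := TT_summable.congr (fun n => (hnorm n).symm)
  have key := MeasureTheory.integral_tsum_of_summable_integral_norm hF_int hF_sum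
  calc ∑' n, TT n = ∑' n, ∫ x in Set.Ioc (0:ℝ) 1, (2*x - x^2)^n / n.factorial :=
        (tsum_congr hval).symm
    _ = ∫ x in Set.Ioc (0:ℝ) 1, ∑' n : ℕ, (2*x - x^2)^n / n.factorial := key
    _ = ∫ x in Set.Ioc (0:ℝ) 1, Real.exp (2*x - x^2) := by
        apply MeasureTheory.integral_congr_ae
        filter_upwards with x
        exact real_exp_tsum (2*x - x^2)

/-- The numerator `pₙ` of the `n`th convergent of the regular continued fraction of `α`. -/
noncomputable def cfNum (α : ℝ) (n : ℕ) : ℝ := (GenContFract.of α).nums n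

/-- The denominator `qₙ` of the `n`th convergent of the regular continued fraction of `α`. -/
noncomputable def cfDen (α : ℝ) (n : ℕ) : ℝ := (GenContFract.of α).dens n

theorem errorSum_e_pos_series :
    (∑' n : ℕ, |cfNum (Real.exp 1) n - Real.exp 1 * cfDen (Real.exp 1) n|) =
      (∑' n : ℕ, (2 : ℝ) ^ (2 * n + 1) * (n.factorial : ℝ) / ((2 * n + 1).factorial : ℝ))
        - Real.exp 1 := by
  have hterm : ∀ m : ℕ, |cfNum (Real.exp 1) m - Real.exp 1 * cfDen (Real.exp 1) m|
      = bb (m+1) := by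
    intro m
    rw [cfNum, cfDen, errP m, abs_mul, abs_pow, abs_neg, abs_one, one_pow, one_mul,
      abs_of_pos (bb_pos (m+1))]
  rw [tsum_congr hterm, lhs_regroup, tsumA_eq_integral, ← tsumTT_eq_integral]
  have h2 : ∑' n : ℕ, (2:ℝ)^(2*n+1) * (n.factorial : ℝ) / ((2*n+1).factorial : ℝ)
      = 2 * ∑' n, TT n := by
    rw [← tsum_mul_left]
    apply tsum_congr
    intro n
    unfold TT
    rw [pow_succ, pow_mul]
    norm_num
    ring
  rw [h2]
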